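/- Let p₁, p₂, p₃, p₄ be points of Euclidean three-space ℝ³. Then D(p₁,p₂,p₃,p₄) = 8·(det M)², where M is the 3×3 matrix whose rows are p₂ − p₁, p₃ − p₁, p₄ − p₁. Consequently, p₁, p₂, p₃, p₄ are the vertices of a (non-degenerate) simplex in ℝ³ — i.e. they are affinely independent — if and only if D(p₁,p₂,p₃,p₄) ≠ 0. -/

import Mathlib

/-- The Cayley–Menger determinant of four points: the determinant of the `5×5`
matrix with first row `(0,1,1,1,1)`, first column `(0,1,1,1,1)ᵀ`, and remaining
`(i,j)` entry `d_{ij}²` (with `d_{ii} = 0`). -/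
noncomputable def cayleyMenger (p₁ p₂ p₃ p₄ : EuclideanSpace ℝ (Fin 3)) : ℝ :=
  Matrix.det (Matrix.of
    ![![0, 1, 1, 1, 1],
      ![1, 0, dist p₁ p₂ ^ 2, dist p₁ p₃ ^ 2, dist p₁ p₄ ^ 2],
      ![1, dist p₁ p₂ ^ 2, 0, dist p₂ p₃ ^ 2, dist p₂ p₄ ^ 2],
      ![1, dist p₁ p₃ ^ 2, dist p₂ p₃ ^ 2, 0, dist p₃ p₄ ^ 2],
      ![1, dist p₁ p₄ ^ 2, dist p₂ p₄ ^ 2, dist p₃ p₄ ^ 2, 0]])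

set_option maxHeartbeats 1000000 in
/-- Explicit expansion of the `5×5` Cayley–Menger-shaped determinant with
abstract entries. -/
lemma det5_cm_aux (a b c d e f : ℝ) :
    Matrix.det (Matrix.of
      ![![0, 1, 1, 1, 1],
        ![1, 0, a, b, c],
        ![1, a, 0, d, e],
        ![1, b, d, 0, f],
        ![1, c, e, f, 0]]) =
    -2*d*e*f + 2*c*d*f + 2*c*d*e + -2*c*d^2 + -2*c^2*d + 2*b*e*f + -2*b*e^2 +
      2*b*d*e + -2*b*c*f + 2*b*c*e + 2*b*c*d + -2*b^2*e + -2*a*f^2 + 2*a*e*f +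
      2*a*d*f + 2*a*c*f + -2*a*c*e + 2*a*c*d + 2*a*b*f + 2*a*b*e + -2*a*b*d + -2*a^2*f := by
  simp [Matrix.det_succ_row_zero, Fin.sum_univ_succ, Fin.succAbove]
  ring

/-- The equivalence between `Fin 3` and the nonzero elements of `Fin 4`. -/
def finThreeEquivNeZero : Fin 3 ≃ {x : Fin 4 // x ≠ 0} :=
  { toFun := fun i => ⟨i.succ, Fin.succ_ne_zero i⟩,
    invFun := fun x => (x : Fin 4).pred x.2,
    left_inv := fun i => by simp,
    right_inv := fun x => by simp }

/-- `D(p₁,p₂,p₃,p₄) = 8 (det M)²`, where `M` is the matrix with rows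
`p₂ - p₁, p₃ - p₁, p₄ - p₁`; consequently the four points are affinely
independent (vertices of a nondegenerate simplex) iff `D ≠ 0`. -/
theorem cayleyMenger_eq_eight_det_sq_and_affineIndependent_iff
    (p₁ p₂ p₃ p₄ : EuclideanSpace ℝ (Fin 3)) :
    cayleyMenger p₁ p₂ p₃ p₄ =
      8 * Matrix.det (Matrix.of fun i j : Fin 3 =>
        (![p₂ - p₁, p₃ - p₁, p₄ - p₁] i) j) ^ 2 ∧
    (AffineIndependent ℝ ![p₁, p₂, p₃, p₄] ↔ cayleyMenger p₁ p₂ p₃ p₄ ≠ 0) := by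
  set A : Matrix (Fin 3) (Fin 3) ℝ :=
    Matrix.of fun i j : Fin 3 => (![p₂ - p₁, p₃ - p₁, p₄ - p₁] i) j with hA
  have key : cayleyMenger p₁ p₂ p₃ p₄ = 8 * Matrix.det A ^ 2 := by
    have hd : ∀ p q : EuclideanSpace ℝ (Fin 3),
        dist p q ^ 2 = (p 0 - q 0)^2 + (p 1 - q 1)^2 + (p 2 - q 2)^2 := by
      intro p q
      rw [EuclideanSpace.dist_eq, Real.sq_sqrt (by positivity)]
      simp [Fin.sum_univ_three, Real.dist_eq, sq_abs]
    rw [cayleyMenger, det5_cm_aux, hA, Matrix.det_fin_three]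
    simp only [Matrix.of_apply, Matrix.cons_val_zero, Matrix.cons_val_one, Matrix.head_cons,
      Matrix.cons_val_two, Matrix.vecHead, Matrix.vecTail, Function.comp_apply,
      Fin.succ_zero_eq_one, PiLp.sub_apply, hd]
    ring
  have haff : AffineIndependent ℝ ![p₁, p₂, p₃, p₄] ↔ Matrix.det A ≠ 0 := by
    rw [affineIndependent_iff_linearIndependent_vsub ℝ ![p₁, p₂, p₃, p₄] 0]
    rw [← linearIndependent_equiv finThreeEquivNeZero]
    have hcomp : ((fun i : {x : Fin 4 // x ≠ 0} =>
        ![p₁, p₂, p₃, p₄] (i : Fin 4) -ᵥ ![p₁, p₂, p₃, p₄] 0) ∘ finThreeEquivNeZero) =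
        fun i : Fin 3 => WithLp.toLp 2 (A i) := by
      funext i
      fin_cases i <;> rfl
    rw [hcomp]
    rw [show (fun i : Fin 3 => WithLp.toLp 2 (A i)) =
        (WithLp.linearEquiv 2 ℝ (Fin 3 → ℝ)).symm.toLinearMap ∘ A.row from rfl,
      LinearMap.linearIndependent_iff _ (LinearEquiv.ker _)]
    rw [Matrix.linearIndependent_rows_iff_isUnit, Matrix.isUnit_iff_isUnit_det,
      isUnit_iff_ne_zero]
  refine ⟨key, haff.trans ?_⟩
  rw [key]
  constructor
  · intro h
    positivity
  · intro h hd0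
    rw [hd0] at h
    simp at h
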